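/- For a prime p, the p-adic valuation estimate v_p((k!/n!)·S(n,k)·(ζ−1)^{n−k}) ≥ 0 holds for all 1 ≤ k ≤ n, where S(n,k) is the Stirling number of the second kind and ζ a primitive p-th root of unity in ℚ_p(ζ) (with v_p(ζ−1) = 1/(p−1)). -/

import Mathlib

/-- Stirling numbers of the second kind `S(n,k)`. -/
def stirlingS : ℕ → ℕ → ℕ
  | 0, 0 => 1
  | 0, _ + 1 => 0
  | _ + 1, 0 => 0
  | n + 1, k + 1 => stirlingS n k + (k + 1) * stirlingS n (k + 1)

lemma stirlingS_succ (n k : ℕ) :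
    stirlingS (n+1) (k+1) = stirlingS n k + (k + 1) * stirlingS n (k + 1) := rfl

lemma stirlingS_zero_succ (k : ℕ) : stirlingS 0 (k+1) = 0 := rfl
lemma stirlingS_succ_zero (n : ℕ) : stirlingS (n+1) 0 = 0 := rfl

lemma stirlingS_eq_zero_of_lt : ∀ {n k : ℕ}, n < k → stirlingS n k = 0
  | 0, _+1, _ => rfl
  | n+1, k+1, h => by
    rw [stirlingS_succ, stirlingS_eq_zero_of_lt (by omega),
      stirlingS_eq_zero_of_lt (by omega)]
    simp

lemma stirlingS_pos : ∀ (n k : ℕ), 1 ≤ k → k ≤ n → 0 < stirlingS n k := by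
  intro n
  induction n with
  | zero => omega
  | succ n IH =>
    intro k hk hkn
    match k, hk with
    | k+1, _ =>
      rw [stirlingS_succ]
      rcases Nat.eq_zero_or_pos k with rfl | hk1
      · rcases Nat.eq_zero_or_pos n with rfl | hn
        · decide
        · have := IH 1 le_rfl hn
          show 0 < stirlingS n 0 + 1 * stirlingS n 1
          omega
      · have := IH k hk1 (by omega)
        omega

lemma stirlingS_one : ∀ (n : ℕ), 1 ≤ n → stirlingS n 1 = 1
  | 1, _ => rfl
  | n+2, _ => by
    have := stirlingS_one (n+1) (by omega)
    show stirlingS (n+1) 0 + 1 * stirlingS (n+1) 1 = 1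
    rw [stirlingS_succ_zero, this]

lemma stir_id_one (n : ℕ) (hn : 1 ≤ n) :
    1 * stirlingS n 1 = ∑ i ∈ Finset.range n, n.choose (i+1) * stirlingS (n-(i+1)) 0 := by
  rw [one_mul, stirlingS_one n hn]
  rw [Finset.sum_eq_single_of_mem (n-1) (by simp; omega)]
  · have h1 : n - 1 + 1 = n := by omega
    rw [h1, Nat.choose_self, Nat.sub_self]
    rfl
  · intro i hi hne
    have hi' : i < n := Finset.mem_range.mp hi
    have : n - (i+1) = (n - (i+1) - 1) + 1 := by omega
    rw [this, stirlingS_succ_zero, mul_zero]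

lemma stir_id : ∀ (n : ℕ), 1 ≤ n → ∀ (k : ℕ), 1 ≤ k →
    k * stirlingS n k =
      ∑ i ∈ Finset.range n, n.choose (i+1) * stirlingS (n-(i+1)) (k-1) := by
  intro n
  induction n with
  | zero => omega
  | succ n IH =>
    intro _ k hk
    match k, hk with
    | 1, _ => exact stir_id_one (n+1) (by omega)
    | (j+2), _ =>
      rcases Nat.eq_zero_or_pos n with rfl | hn
      · simp [stirlingS_succ, stirlingS_zero_succ]
      · have hstep : ∀ i ∈ Finset.range (n+1),
            (n+1).choose (i+1) * stirlingS (n+1-(i+1)) (j+2-1)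
              = n.choose i * stirlingS (n-i) (j+1) + n.choose (i+1) * stirlingS (n-i) (j+1) := by
          intro i hi
          have h1 : n+1-(i+1) = n - i := by omega
          rw [h1, Nat.choose_succ_succ, Nat.add_mul]
          rfl
        rw [Finset.sum_congr rfl hstep, Finset.sum_add_distrib]
        have hA : ∑ i ∈ Finset.range (n+1), n.choose i * stirlingS (n-i) (j+1)
            = (j+2) * stirlingS n (j+2) + stirlingS n (j+1) := by
          rw [Finset.sum_range_succ']
          have h0 := IH hn (j+2) (by omega)
          rw [show j+2-1 = j+1 from rfl] at h0
          rw [← h0]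
          simp
        have hB : ∑ i ∈ Finset.range (n+1), n.choose (i+1) * stirlingS (n-i) (j+1)
            = (j+1) * stirlingS n (j+1) + (j+1) * ((j+2) * stirlingS n (j+2)) := by
          rw [Finset.sum_range_succ, Nat.choose_succ_self, zero_mul, add_zero]
          have hstep2 : ∀ i ∈ Finset.range n,
              n.choose (i+1) * stirlingS (n-i) (j+1)
                = n.choose (i+1) * stirlingS (n-(i+1)) j
                  + (j+1) * (n.choose (i+1) * stirlingS (n-(i+1)) (j+1)) := by
            intro i hi
            have hi' : i < n := Finset.mem_range.mp hi
            have h2 : n - i = (n - (i+1)) + 1 := by omega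
            rw [h2, stirlingS_succ]
            ring
          rw [Finset.sum_congr rfl hstep2, Finset.sum_add_distrib, ← Finset.mul_sum]
          have e1 := IH hn (j+1) (by omega)
          have e2 := IH hn (j+2) (by omega)
          rw [show j+1-1 = j from rfl] at e1
          rw [show j+2-1 = j+1 from rfl] at e2
          rw [← e1, ← e2]
        rw [hA, hB, stirlingS_succ]
        ring

lemma digits_sum_pos (p n : ℕ) (hn : 1 ≤ n) : 1 ≤ (Nat.digits p n).sum := by
  have hn' : n ≠ 0 := by omega
  have hne : Nat.digits p n ≠ [] := Nat.digits_ne_nil_iff_ne_zero.mpr hn'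
  have hlast := Nat.getLast_digit_ne_zero p hn'
  have hmem := List.getLast_mem hne
  have := List.single_le_sum (l := Nat.digits p n) (fun x _ => Nat.zero_le x) _ hmem
  omega

lemma kummer_eq (p : ℕ) [hp : Fact p.Prime] {m n : ℕ} (h : m ≤ n) :
    (Nat.digits p m).sum + (Nat.digits p (n-m)).sum
      = (Nat.digits p n).sum + (p-1) * padicValNat p (n.choose m) := by
  have h1 := sub_one_mul_padicValNat_choose_eq_sub_sum_digits (p := p) h
  have e1 := sub_one_mul_padicValNat_factorial (p := p) n
  have e2 := sub_one_mul_padicValNat_factorial (p := p) m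
  have e3 := sub_one_mul_padicValNat_factorial (p := p) (n-m)
  have hv : padicValNat p (m.factorial) + padicValNat p ((n-m).factorial)
      ≤ padicValNat p (n.factorial) := by
    rw [← padicValNat.mul (Nat.factorial_ne_zero _) (Nat.factorial_ne_zero _)]
    rcases (padicValNat_dvd_iff _ _).mp
      ((pow_padicValNat_dvd (p := p) (n := m.factorial * (n-m).factorial)).trans
        (Nat.factorial_mul_factorial_dvd_factorial h)) with h' | h'
    · exact absurd h' (Nat.factorial_ne_zero n)
    · exact h'
  have h4 : (p-1) * (padicValNat p (m.factorial) + padicValNat p ((n-m).factorial))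
      ≤ (p-1) * padicValNat p (n.factorial) := Nat.mul_le_mul_left _ hv
  rw [Nat.mul_add, e2, e3, e1] at h4
  have d1 := Nat.digit_sum_le p n
  have d2 := Nat.digit_sum_le p m
  have d3 := Nat.digit_sum_le p (n-m)
  generalize (p-1) * padicValNat p (n.choose m) = X at h1 ⊢
  omega

lemma key (p : ℕ) [hpf : Fact p.Prime] : ∀ k n : ℕ, 1 ≤ k → k ≤ n →
    k ≤ (Nat.digits p n).sum + (p - 1) * padicValNat p (k.factorial * stirlingS n k) := by
  intro k
  induction k with
  | zero => omega
  | succ k IH =>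
    intro n _ hn
    rcases Nat.eq_zero_or_pos k with rfl | hk
    · exact le_trans (digits_sum_pos p n (by omega)) (Nat.le_add_right _ _)
    · -- identity
      have hid : (k+1).factorial * stirlingS n (k+1)
          = ∑ i ∈ Finset.range n, n.choose (i+1) * (k.factorial * stirlingS (n-(i+1)) k) := by
        have hI := stir_id n (by omega) (k+1) (by omega)
        simp only [Nat.add_sub_cancel] at hI
        calc (k+1).factorial * stirlingS n (k+1)
            = k.factorial * ((k+1) * stirlingS n (k+1)) := by
              rw [Nat.factorial_succ]; ring
          _ = k.factorial * ∑ i ∈ Finset.range n, n.choose (i+1) * stirlingS (n-(i+1)) k := by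
              rw [hI]
          _ = _ := by
              rw [Finset.mul_sum]
              exact Finset.sum_congr rfl (fun i _ => by ring)
      set f : ℕ → ℕ :=
        fun i => padicValNat p (n.choose (i+1) * (k.factorial * stirlingS (n-(i+1)) k)) with hf
      have hnk : 1 ≤ n - k := by omega
      have hne : ((Finset.range (n-k)).image f).Nonempty :=
        ⟨f 0, Finset.mem_image_of_mem f (by simp; omega)⟩
      set c := ((Finset.range (n-k)).image f).min' hne with hcdef
      obtain ⟨i0, hi0mem, hi0⟩ := Finset.mem_image.mp (Finset.min'_mem _ hne)
      rw [← hcdef] at hi0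
      have hi0' : i0 < n - k := Finset.mem_range.mp hi0mem
      have hc_le : ∀ i ∈ Finset.range (n-k), c ≤ f i :=
        fun i hi => Finset.min'_le _ _ (Finset.mem_image_of_mem f hi)
      have hdvd : p ^ c ∣ (k+1).factorial * stirlingS n (k+1) := by
        rw [hid]
        apply Finset.dvd_sum
        intro i hi
        by_cases h2 : i < n - k
        · exact (pow_dvd_pow p (hc_le i (Finset.mem_range.mpr h2))).trans pow_padicValNat_dvd
        · have hz : stirlingS (n-(i+1)) k = 0 :=
            stirlingS_eq_zero_of_lt (by have := Finset.mem_range.mp hi; omega)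
          simp [hz]
      have hSpos : 0 < stirlingS n (k+1) := stirlingS_pos _ _ (by omega) hn
      have hne0 : (k+1).factorial * stirlingS n (k+1) ≠ 0 :=
        Nat.mul_ne_zero (Nat.factorial_ne_zero _) (by omega)
      have hcv : c ≤ padicValNat p ((k+1).factorial * stirlingS n (k+1)) := by
        rcases (padicValNat_dvd_iff _ _).mp hdvd with h | h
        · exact absurd h hne0
        · exact h
      have hIH := IH (n - (i0+1)) hk (by omega)
      have hkum := kummer_eq p (show i0+1 ≤ n by omega)
      have hdp := digits_sum_pos p (i0+1) (by omega)
      have hvmul : f i0 = padicValNat p (n.choose (i0+1))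
          + padicValNat p (k.factorial * stirlingS (n-(i0+1)) k) :=
        padicValNat.mul (Nat.choose_pos (by omega)).ne'
          (Nat.mul_ne_zero (Nat.factorial_ne_zero _)
            (stirlingS_pos _ _ hk (by omega)).ne')
      have hmono : (p-1) * c ≤ (p-1) * padicValNat p ((k+1).factorial * stirlingS n (k+1)) :=
        Nat.mul_le_mul_left _ hcv
      have hexp : (p-1) * c = (p-1) * padicValNat p (n.choose (i0+1))
          + (p-1) * padicValNat p (k.factorial * stirlingS (n-(i0+1)) k) := by
        rw [← hi0, hvmul, Nat.mul_add]
      generalize hX : (p-1) * padicValNat p (k.factorial * stirlingS (n-(i0+1)) k) = X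
        at hIH hexp
      generalize hY : (p-1) * padicValNat p (n.choose (i0+1)) = Y at hkum hexp
      generalize hZ : (p-1) * padicValNat p ((k+1).factorial * stirlingS n (k+1)) = Z at hmono ⊢
      generalize hW : (p-1) * c = W at hmono hexp
      omega

/-- For a prime `p`, the `p`-adic valuation estimate
`v_p((k!/n!)·S(n,k)·(ζ−1)^{n−k}) ≥ 0` for `1 ≤ k ≤ n`, where `ζ` is a primitive
`p`-th root of unity (so `v_p(ζ−1) = 1/(p−1)`); i.e.
`v_p(k!) + v_p(S(n,k)) + (n−k)/(p−1) ≥ v_p(n!)`. -/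
theorem stmt7 (p : ℕ) (hp : p.Prime) (n k : ℕ) (hk : 1 ≤ k) (hkn : k ≤ n) :
    (padicValNat p n.factorial : ℚ) ≤
      (padicValNat p k.factorial : ℚ) + (padicValNat p (stirlingS n k) : ℚ) +
        ((n : ℚ) - (k : ℚ)) / ((p : ℚ) - 1) := by
  haveI : Fact p.Prime := ⟨hp⟩
  have hp2 : 2 ≤ p := hp.two_le
  have hkey := key p k n hk hkn
  have hsplit : padicValNat p (k.factorial * stirlingS n k)
      = padicValNat p k.factorial + padicValNat p (stirlingS n k) :=
    padicValNat.mul (Nat.factorial_ne_zero k) (stirlingS_pos _ _ hk hkn).ne'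
  rw [hsplit] at hkey
  have hleg := sub_one_mul_padicValNat_factorial (p := p) n
  have hsn := Nat.digit_sum_le p n
  have hq : (0:ℚ) < (p:ℚ) - 1 := by
    have : (2:ℚ) ≤ (p:ℚ) := by exact_mod_cast hp2
    linarith
  have hcast : ((p - 1 : ℕ) : ℚ) = (p:ℚ) - 1 := by
    rw [Nat.cast_pred (by omega)]
  -- cast Legendre
  have e1 : ((p:ℚ) - 1) * (padicValNat p n.factorial : ℚ)
      = (n : ℚ) - ((Nat.digits p n).sum : ℚ) := by
    have := congrArg (fun x : ℕ => (x : ℚ)) hleg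
    simp only [Nat.cast_mul] at this
    rw [hcast, Nat.cast_sub hsn] at this
    exact this
  -- cast key
  have e2 : (k : ℚ) ≤ ((Nat.digits p n).sum : ℚ)
      + ((p:ℚ) - 1) * ((padicValNat p k.factorial : ℚ) + (padicValNat p (stirlingS n k) : ℚ)) := by
    have := (Nat.cast_le (α := ℚ)).mpr hkey
    push_cast at this
    rw [hcast] at this
    convert this using 2 <;> push_cast <;> rfl
  rw [← mul_le_mul_iff_right₀ hq]
  calc ((p:ℚ) - 1) * (padicValNat p n.factorial : ℚ)
      = (n : ℚ) - ((Nat.digits p n).sum : ℚ) := e1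
    _ ≤ ((p:ℚ) - 1) * ((padicValNat p k.factorial : ℚ) + (padicValNat p (stirlingS n k) : ℚ))
        + ((n : ℚ) - (k : ℚ)) := by linarith
    _ = ((p:ℚ) - 1) * ((padicValNat p k.factorial : ℚ) + (padicValNat p (stirlingS n k) : ℚ)
        + ((n : ℚ) - (k : ℚ)) / ((p:ℚ) - 1)) := by
        field_simp
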